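/- Under the hypotheses of the PE-Lyapunov exponential stability theorem — ẋ = f(x,t) with f(0,t) = 0, λ₁‖x‖² ≤ 𝓛_x(t) ≤ λ₂‖x‖², d𝓛_x/dt ≤ −γ xᵀΣ(t)x with Σ(t) ≥ 0, ‖Σ(t)‖ ≤ λ_Σ, Σ PE with constants T, μ, and d𝓛_x/dt ≤ −(1/c)‖f(x,t)‖² — the Lyapunov function satisfies, for every t ≥ 0, the one-period contraction 𝓛_x(t+T) ≤ (1−σ) 𝓛_x(t), where σ = ρμTγ/((1+ρ)(1+ρ c T² γ λ_Σ) λ₂) and ρ > 0 is arbitrary; with the choice ρ = λ₂/(μTγ) one gets σ = 1/((1+ρ)(1+ρ c T² γ λ_Σ)) < 1. -/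

import Mathlib

open Matrix MeasureTheory

noncomputable section

/-- Euclidean norm of a finite-dimensional real vector. -/
def euclNorm {ι : Type*} [Fintype ι] (x : ι → ℝ) : ℝ := Real.sqrt (∑ i, x i * x i)

/-- The contraction factor `σ(ρ) = ρμTγ/((1+ρ)(1+ρcT²γλ_Σ)λ₂)`. -/
def sigmaOf (ρ μ T γ c lamS lam2 : ℝ) : ℝ :=
  ρ * μ * T * γ / ((1 + ρ) * (1 + ρ * c * T ^ 2 * γ * lamS) * lam2)

lemma euclNorm_sq {ι : Type*} [Fintype ι] (z : ι → ℝ) : euclNorm z ^ 2 = z ⬝ᵥ z := by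
  rw [euclNorm, Real.sq_sqrt (Finset.sum_nonneg fun i _ => mul_self_nonneg _)]
  rfl

lemma euclNorm_nonneg {ι : Type*} [Fintype ι] (z : ι → ℝ) : 0 ≤ euclNorm z :=
  Real.sqrt_nonneg _

lemma dot_self_nonneg {ι : Type*} [Fintype ι] (z : ι → ℝ) : 0 ≤ z ⬝ᵥ z :=
  Finset.sum_nonneg fun i _ => mul_self_nonneg _

def toEuc (d : ℕ) : (Fin d → ℝ) ≃L[ℝ] EuclideanSpace ℝ (Fin d) :=
  (EuclideanSpace.equiv (Fin d) ℝ).symm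

lemma euclNorm_eq_norm {d : ℕ} (z : Fin d → ℝ) : ‖toEuc d z‖ = euclNorm z := by
  rw [toEuc, EuclideanSpace.norm_eq, euclNorm]
  congr 1
  exact Finset.sum_congr rfl fun i _ => by rw [Real.norm_eq_abs, sq_abs, sq]; rfl

lemma dot_symm {d : ℕ} {M : Matrix (Fin d) (Fin d) ℝ} (hM : M.PosSemidef) (a e : Fin d → ℝ) :
    a ⬝ᵥ M *ᵥ e = e ⬝ᵥ M *ᵥ a := by
  have hs : Mᵀ = M := hM.1
  rw [dotProduct_mulVec, dotProduct_comm, ← Matrix.mulVec_transpose, hs]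

lemma quad_lower {d : ℕ} {M : Matrix (Fin d) (Fin d) ℝ} (hM : M.PosSemidef)
    (a e : Fin d → ℝ) {ρ : ℝ} (hρ : 0 < ρ) :
    ρ / (1 + ρ) * (a ⬝ᵥ M *ᵥ a) - ρ * (e ⬝ᵥ M *ᵥ e) ≤ (a + e) ⬝ᵥ M *ᵥ (a + e) := by
  set θ : ℝ := (1 + ρ)⁻¹ with hθdef
  have hθ : 0 < θ := inv_pos.2 (by linarith)
  set s : ℝ := Real.sqrt θ with hs
  have hs0 : 0 < s := Real.sqrt_pos.2 hθ
  have hss : s * s = θ := Real.mul_self_sqrt hθ.le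
  have hpos := hM.dotProduct_mulVec_nonneg (s • a + s⁻¹ • e)
  simp only [star_trivial] at hpos
  have hsym := dot_symm hM a e
  have hexp : (s • a + s⁻¹ • e) ⬝ᵥ M *ᵥ (s • a + s⁻¹ • e) =
      θ * (a ⬝ᵥ M *ᵥ a) + 2 * (a ⬝ᵥ M *ᵥ e) + θ⁻¹ * (e ⬝ᵥ M *ᵥ e) := by
    simp only [Matrix.mulVec_add, Matrix.mulVec_smul, dotProduct_add, add_dotProduct,
      dotProduct_smul, smul_dotProduct, smul_eq_mul, hsym]
    rw [← hss]
    field_simp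
    ring
  rw [hexp] at hpos
  have hexp2 : (a + e) ⬝ᵥ M *ᵥ (a + e) =
      (a ⬝ᵥ M *ᵥ a) + 2 * (a ⬝ᵥ M *ᵥ e) + (e ⬝ᵥ M *ᵥ e) := by
    simp only [Matrix.mulVec_add, dotProduct_add, add_dotProduct, hsym]; ring
  rw [hexp2]
  have hθinv : θ⁻¹ = 1 + ρ := by rw [hθdef, inv_inv]
  have hρθ : ρ / (1 + ρ) = 1 - θ := by rw [hθdef]; field_simp; ring
  rw [hθinv] at hpos
  rw [hρθ]
  linarith [hpos]

lemma single_quad {d : ℕ} (M : Matrix (Fin d) (Fin d) ℝ) (i j : Fin d) :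
    (Pi.single i 1 : Fin d → ℝ) ⬝ᵥ M *ᵥ (Pi.single j 1) = M i j := by
  simp [Matrix.mulVec_single, single_dotProduct]

lemma entry_bound {d : ℕ} {M : Matrix (Fin d) (Fin d) ℝ} {lamS : ℝ} (hpsd : M.PosSemidef)
    (hbd : ∀ z : Fin d → ℝ, z ⬝ᵥ M *ᵥ z ≤ lamS * (z ⬝ᵥ z)) (i j : Fin d) : |M i j| ≤ lamS := by
  have hdiag : ∀ k : Fin d, 0 ≤ M k k ∧ M k k ≤ lamS := by
    intro k
    have h1 := hpsd.dotProduct_mulVec_nonneg (Pi.single k 1)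
    simp only [star_trivial] at h1
    have h2 := hbd (Pi.single k 1)
    rw [single_quad] at h1 h2
    have h3 : (Pi.single k 1 : Fin d → ℝ) ⬝ᵥ (Pi.single k 1) = 1 := by
      simp [single_dotProduct, Pi.single_apply]
    rw [h3, mul_one] at h2
    exact ⟨h1, h2⟩
  rcases eq_or_ne i j with rfl | hij
  · rw [abs_of_nonneg (hdiag i).1]
    exact (hdiag i).2
  · have hsym : M j i = M i j := by
      have h := (dot_symm hpsd (Pi.single i 1) (Pi.single j 1)).symm
      rwa [single_quad, single_quad] at h
    have hz : ∀ ε : ℝ, ε = 1 ∨ ε = -1 →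
        M i i + ε * M i j + ε * M j i + ε * ε * M j j ≤ lamS * (1 + ε * ε) := by
      intro ε hε
      set z : Fin d → ℝ := (Pi.single i 1 : Fin d → ℝ) + ε • (Pi.single j 1 : Fin d → ℝ) with hzdef
      have h1 := hbd z
      have hq : z ⬝ᵥ M *ᵥ z =
          M i i + ε * M i j + ε * M j i + ε * ε * M j j := by
        rw [hzdef]
        simp only [Matrix.mulVec_add, Matrix.mulVec_smul, dotProduct_add, add_dotProduct,
          dotProduct_smul, smul_dotProduct, smul_eq_mul, single_quad]
        ring
      have hd : z ⬝ᵥ z = 1 + ε * ε := by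
        rw [hzdef]
        simp only [dotProduct_add, add_dotProduct, dotProduct_smul, smul_dotProduct,
          smul_eq_mul]
        rw [show (Pi.single i 1 : Fin d → ℝ) ⬝ᵥ (Pi.single i 1) = 1 by
            simp [single_dotProduct, Pi.single_apply],
          show (Pi.single j 1 : Fin d → ℝ) ⬝ᵥ (Pi.single j 1) = 1 by
            simp [single_dotProduct, Pi.single_apply],
          show (Pi.single i 1 : Fin d → ℝ) ⬝ᵥ (Pi.single j 1) = 0 by
            simp [single_dotProduct, Pi.single_apply, hij],
          show (Pi.single j 1 : Fin d → ℝ) ⬝ᵥ (Pi.single i 1) = 0 by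
            simp [single_dotProduct, Pi.single_apply, hij.symm]]
        ring
      rw [hq, hd] at h1
      exact h1
    have hp := hz 1 (Or.inl rfl)
    have hm := hz (-1) (Or.inr rfl)
    have hii := hdiag i
    have hjj := hdiag j
    rw [abs_le]
    constructor <;> nlinarith [hsym]


set_option maxHeartbeats 1000000

/-- one-period contraction of the Lyapunov function.  Under the hypotheses
of the PE-Lyapunov exponential stability theorem, for every `ρ > 0` and every `t ≥ 0`,
`𝓛_x(t+T) ≤ (1 − σ(ρ)) 𝓛_x(t)` with `σ(ρ) = ρμTγ/((1+ρ)(1+ρcT²γλ_Σ)λ₂)`; with the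
choice `ρ = λ₂/(μTγ)` one gets `σ = 1/((1+ρ)(1+ρcT²γλ_Σ)) < 1`. -/
theorem stmt16
    (d : ℕ) (f : (Fin d → ℝ) → ℝ → (Fin d → ℝ)) (L : ℝ → (Fin d → ℝ) → ℝ)
    (Sig : ℝ → Matrix (Fin d) (Fin d) ℝ)
    (lam1 lam2 lamS γ c T μ : ℝ)
    (hlam1 : 0 < lam1) (hlam2 : 0 < lam2) (hlamS : 0 < lamS)
    (hγ : 0 < γ) (hc : 0 < c) (hT : 0 < T) (hμ : 0 < μ)
    (hf0 : ∀ t : ℝ, f 0 t = 0)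
    (hSmeas : ∀ i j : Fin d, Measurable fun t => Sig t i j)
    (hSpsd : ∀ t : ℝ, 0 ≤ t → (Sig t).PosSemidef)
    (hSbound : ∀ t : ℝ, 0 ≤ t → ∀ z : Fin d → ℝ,
      z ⬝ᵥ (Sig t).mulVec z ≤ lamS * (z ⬝ᵥ z))
    (hPE : ∀ t : ℝ, 0 ≤ t →
      ((T⁻¹ • Matrix.of fun i j => ∫ τ in t..(t + T), Sig τ i j) -
        μ • (1 : Matrix (Fin d) (Fin d) ℝ)).PosSemidef)
    (hL : ∀ t : ℝ, 0 ≤ t → ∀ z : Fin d → ℝ,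
      lam1 * euclNorm z ^ 2 ≤ L t z ∧ L t z ≤ lam2 * euclNorm z ^ 2)
    (x : ℝ → (Fin d → ℝ)) (hsol : ∀ t : ℝ, 0 ≤ t → HasDerivAt x (f (x t) t) t)
    (DL : ℝ → ℝ)
    (hLd : ∀ t : ℝ, 0 ≤ t → HasDerivAt (fun s => L s (x s)) (DL t) t)
    (ha : ∀ t : ℝ, 0 ≤ t → DL t ≤ -γ * (x t ⬝ᵥ (Sig t).mulVec (x t)))
    (hcc : ∀ t : ℝ, 0 ≤ t → DL t ≤ -(1 / c) * euclNorm (f (x t) t) ^ 2) :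
    (∀ ρ : ℝ, 0 < ρ → ∀ t : ℝ, 0 ≤ t →
      L (t + T) (x (t + T)) ≤ (1 - sigmaOf ρ μ T γ c lamS lam2) * L t (x t)) ∧
    (sigmaOf (lam2 / (μ * T * γ)) μ T γ c lamS lam2 =
        1 / ((1 + lam2 / (μ * T * γ)) *
          (1 + (lam2 / (μ * T * γ)) * c * T ^ 2 * γ * lamS)) ∧
      sigmaOf (lam2 / (μ * T * γ)) μ T γ c lamS lam2 < 1) := by
  constructor
  · intro ρ hρ t ht
    set b := t + T with hb
    have htb : t ≤ b := by simp [hb]; linarith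
    have hmem : ∀ s ∈ Set.Icc t b, (0:ℝ) ≤ s := fun s hs => le_trans ht hs.1
    -- continuity
    have hxc : ContinuousOn x (Set.Icc t b) := fun s hs =>
      (hsol s (hmem s hs)).continuousAt.continuousWithinAt
    have hLc : ContinuousOn (fun s => L s (x s)) (Set.Icc t b) := fun s hs =>
      (hLd s (hmem s hs)).continuousAt.continuousWithinAt
    set g : ℝ → (Fin d → ℝ) := fun s => f (x s) s with hgdef
    set q : ℝ → ℝ := fun s => g s ⬝ᵥ g s with hqdef
    have hq0 : ∀ s, 0 ≤ q s := fun s => dot_self_nonneg _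
    -- measurability of g and q on [t,b]
    have hgmeas : AEStronglyMeasurable g (volume.restrict (Set.Icc t b)) := by
      refine (measurable_deriv x).aestronglyMeasurable.congr ?_
      refine (ae_restrict_iff' measurableSet_Icc).2 (ae_of_all _ fun s hs => ?_)
      exact (hsol s (hmem s hs)).deriv
    have hqmeas : AEStronglyMeasurable q (volume.restrict (Set.Icc t b)) := by
      refine Finset.aestronglyMeasurable_fun_sum _ fun i _ => ?_
      exact ((continuous_apply i).comp_aestronglyMeasurable hgmeas).mul
        ((continuous_apply i).comp_aestronglyMeasurable hgmeas)
    set Δ : ℝ := L t (x t) - L b (x b) with hΔdef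
    -- the master FTC inequality
    have key : ∀ φ : ℝ → ℝ, IntegrableOn φ (Set.Icc t b) →
        (∀ s ∈ Set.Ioo t b, φ s ≤ -DL s) → ∫ s in t..b, φ s ≤ Δ := by
      intro φ hint hle
      have h := intervalIntegral.integral_le_sub_of_hasDeriv_right_of_le
        (g := fun s => -(L s (x s))) (g' := fun s => -DL s) (φ := φ) htb hLc.neg
        (fun s hs => ((hLd s (hmem s (Set.Ioo_subset_Icc_self hs))).neg).hasDerivWithinAt)
        hint hle
      have hΔeq : Δ = L t (x t) - L b (x b) := hΔdef
      simp only [neg_sub_neg] at h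
      linarith [h]
    have hDLle : ∀ s ∈ Set.Ioo t b, (0:ℝ) ≤ -DL s := by
      intro s hs
      have h1 := hcc s (hmem s (Set.Ioo_subset_Icc_self hs))
      have h2 : 0 ≤ euclNorm (f (x s) s) ^ 2 := sq_nonneg _
      have h3 : 0 ≤ (1 / c) * euclNorm (f (x s) s) ^ 2 :=
        mul_nonneg (le_of_lt (one_div_pos.2 hc)) h2
      linarith
    have hΔ0 : 0 ≤ Δ := by
      have := key 0 (integrableOn_const measure_Icc_lt_top.ne)
        (fun s hs => hDLle s hs)
      simpa using this
    -- integrability of q via truncation, and the bound ∫ q ≤ c * Δ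
    have hboundInt : ∀ (h : ℝ → ℝ) (C : ℝ),
        AEStronglyMeasurable h (volume.restrict (Set.Icc t b)) →
        (∀ s ∈ Set.Icc t b, ‖h s‖ ≤ C) → IntegrableOn h (Set.Icc t b) := by
      intro h C hm hbd
      exact Integrable.mono' (integrable_const C) hm
        ((ae_restrict_iff' measurableSet_Icc).2 (ae_of_all _ hbd))
    have htruncInt : ∀ n : ℕ, IntegrableOn (fun s => min (q s) n) (Set.Icc t b) := by
      intro n
      refine hboundInt _ n ((hqmeas.aemeasurable.min aemeasurable_const).aestronglyMeasurable) ?_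
      intro s hs
      rw [Real.norm_eq_abs, abs_of_nonneg (le_min (hq0 s) (Nat.cast_nonneg n))]
      exact min_le_right _ _
    have htrunc : ∀ n : ℕ, ∫ s in t..b, min (q s) n ≤ c * Δ := by
      intro n
      have hle : ∀ s ∈ Set.Ioo t b, c⁻¹ * min (q s) n ≤ -DL s := by
        intro s hs
        have h1 := hcc s (hmem s (Set.Ioo_subset_Icc_self hs))
        have h2 : euclNorm (f (x s) s) ^ 2 = q s := euclNorm_sq _
        have h3 : c⁻¹ * min (q s) n ≤ c⁻¹ * q s :=
          mul_le_mul_of_nonneg_left (min_le_left _ _) (inv_nonneg.2 hc.le)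
        have h4 : -(1 / c) * q s = -(c⁻¹ * q s) := by rw [one_div]; ring
        rw [h2, h4] at h1
        linarith
      have h5 := key _ ((htruncInt n).const_mul c⁻¹) hle
      rw [intervalIntegral.integral_const_mul] at h5
      calc ∫ s in t..b, min (q s) n = c * (c⁻¹ * ∫ s in t..b, min (q s) n) := by
            field_simp
        _ ≤ c * Δ := mul_le_mul_of_nonneg_left h5 hc.le
    have hqIoc : IntegrableOn q (Set.Ioc t b) := by
      have hqmeasIoc : AEStronglyMeasurable q (volume.restrict (Set.Ioc t b)) :=
        hqmeas.mono_measure (Measure.restrict_mono Set.Ioc_subset_Icc_self le_rfl)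
      refine ⟨hqmeasIoc, ?_⟩
      have hsup : ∀ s, ⨆ n : ℕ, ENNReal.ofReal (min (q s) n) = ENNReal.ofReal (q s) := by
        intro s
        refine le_antisymm (iSup_le fun n => ENNReal.ofReal_le_ofReal (min_le_left _ _)) ?_
        exact le_iSup_of_le ⌈q s⌉₊ (by rw [min_eq_left (Nat.le_ceil _)])
      have hmeas' : ∀ n : ℕ, AEMeasurable (fun s => ENNReal.ofReal (min (q s) ↑n))
          (volume.restrict (Set.Ioc t b)) := fun n =>
        ENNReal.measurable_ofReal.comp_aemeasurable
          (hqmeasIoc.aemeasurable.min aemeasurable_const)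
      have hlin : ∫⁻ s in Set.Ioc t b, ENNReal.ofReal (q s) ≤ ENNReal.ofReal (c * Δ) := by
        have e1 : ∫⁻ s in Set.Ioc t b, ENNReal.ofReal (q s) =
            ⨆ n : ℕ, ∫⁻ s in Set.Ioc t b, ENNReal.ofReal (min (q s) ↑n) := by
          rw [← lintegral_iSup' hmeas' (ae_of_all _ fun s m k hmk =>
            ENNReal.ofReal_le_ofReal (min_le_min le_rfl (Nat.cast_le.2 hmk)))]
          exact lintegral_congr fun s => (hsup s).symm
        rw [e1]
        refine iSup_le fun n => ?_
        have hIocInt : IntegrableOn (fun s => min (q s) ↑n) (Set.Ioc t b) :=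
          (htruncInt n).mono_set Set.Ioc_subset_Icc_self
        rw [← ofReal_integral_eq_lintegral_ofReal hIocInt
          (ae_of_all _ fun s => le_min (hq0 s) (Nat.cast_nonneg n))]
        refine ENNReal.ofReal_le_ofReal ?_
        rw [← intervalIntegral.integral_of_le htb]
        exact htrunc n
      rw [hasFiniteIntegral_iff_ofReal (ae_of_all _ hq0)]
      exact lt_of_le_of_lt hlin ENNReal.ofReal_lt_top
    have hqIcc : IntegrableOn q (Set.Icc t b) := by
      rwa [integrableOn_Icc_iff_integrableOn_Ioc]
    have hqII : IntervalIntegrable q volume t b :=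
      (intervalIntegrable_iff_integrableOn_Icc_of_le htb).2 hqIcc
    have hqbound : ∫ s in t..b, q s ≤ c * Δ := by
      have hle : ∀ s ∈ Set.Ioo t b, c⁻¹ * q s ≤ -DL s := by
        intro s hs
        have h1 := hcc s (hmem s (Set.Ioo_subset_Icc_self hs))
        have h2 : euclNorm (f (x s) s) ^ 2 = q s := euclNorm_sq _
        have h4 : -(1 / c) * q s = -(c⁻¹ * q s) := by rw [one_div]; ring
        rw [h2, h4] at h1
        linarith
      have h5 := key _ (hqIcc.const_mul c⁻¹) hle
      rw [intervalIntegral.integral_const_mul] at h5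
      calc ∫ s in t..b, q s = c * (c⁻¹ * ∫ s in t..b, q s) := by field_simp
        _ ≤ c * Δ := mul_le_mul_of_nonneg_left h5 hc.le
    -- the norm of the velocity
    set nrm : ℝ → ℝ := fun s => euclNorm (g s) with hnrmdef
    have hnrm0 : ∀ s, 0 ≤ nrm s := fun s => Real.sqrt_nonneg _
    have hnrm_sq : ∀ s, nrm s ^ 2 = q s := fun s => euclNorm_sq _
    have hnrmmeas : AEStronglyMeasurable nrm (volume.restrict (Set.Icc t b)) := by
      have : nrm = fun s => Real.sqrt (q s) := rfl
      rw [this]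
      exact Real.continuous_sqrt.comp_aestronglyMeasurable hqmeas
    have hnrm_le : ∀ s, nrm s ≤ 1 + q s := by
      intro s
      have h1 : nrm s = Real.sqrt (q s) := rfl
      have h2 : q s ≤ (1 + q s) ^ 2 := by nlinarith [hq0 s]
      rw [h1]
      calc Real.sqrt (q s) ≤ Real.sqrt ((1 + q s) ^ 2) := Real.sqrt_le_sqrt h2
        _ = 1 + q s := Real.sqrt_sq (by linarith [hq0 s])
    have hnrmIcc : IntegrableOn nrm (Set.Icc t b) := by
      refine Integrable.mono' ((integrable_const (1:ℝ)).add hqIcc) hnrmmeas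
        (ae_of_all _ fun s => ?_)
      rw [Real.norm_eq_abs, abs_of_nonneg (hnrm0 s)]
      exact hnrm_le s
    have hnrmII : IntervalIntegrable nrm volume t b :=
      (intervalIntegrable_iff_integrableOn_Icc_of_le htb).2 hnrmIcc
    set K : ℝ := ∫ s in t..b, nrm s with hKdef
    have hK0 : 0 ≤ K :=
      intervalIntegral.integral_nonneg htb (fun s _ => hnrm0 s)
    have hKk : ∀ k : ℝ, 0 < k → K ≤ k * T / 2 + (c * Δ) / (2 * k) := by
      intro k hk
      have hpt : ∀ s ∈ Set.Icc t b, nrm s ≤ k / 2 + q s / (2 * k) := by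
        intro s hs
        have h1 := sq_nonneg (nrm s - k)
        have h2 := hnrm_sq s
        have h3 := hq0 s
        have h4 := hnrm0 s
        rw [← sub_nonneg]
        have he : k / 2 + q s / (2 * k) - nrm s =
            (q s - 2 * k * nrm s + k ^ 2) / (2 * k) := by field_simp; ring
        rw [he]
        apply div_nonneg _ (by positivity)
        nlinarith [h1, h2]
      calc K ≤ ∫ s in t..b, (k / 2 + q s / (2 * k)) :=
          intervalIntegral.integral_mono_on htb hnrmII
            (intervalIntegrable_const.add (hqII.div_const _)) hpt
        _ = k * T / 2 + (∫ s in t..b, q s) / (2 * k) := by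
          rw [intervalIntegral.integral_add intervalIntegrable_const (hqII.div_const _),
            intervalIntegral.integral_const, intervalIntegral.integral_div]
          have : b - t = T := by rw [hb]; ring
          rw [this, smul_eq_mul]
          ring
        _ ≤ k * T / 2 + (c * Δ) / (2 * k) := by
          have : (∫ s in t..b, q s) / (2 * k) ≤ (c * Δ) / (2 * k) := by gcongr
          linarith
    have hK2 : K ^ 2 ≤ T * (c * Δ) := by
      rcases eq_or_lt_of_le hK0 with h0 | hKpos
      · rw [← h0]
        have : 0 ≤ c * Δ := mul_nonneg hc.le hΔ0
        nlinarith
      · have h := hKk (K / T) (div_pos hKpos hT)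
        have e1 : K / T * T / 2 = K / 2 := by field_simp
        have e2 : (c * Δ) / (2 * (K / T)) = (c * Δ) * T / (2 * K) := by
          rw [div_eq_div_iff (by positivity) (by positivity)]
          field_simp
        rw [e1, e2] at h
        have h3 : K / 2 ≤ (c * Δ) * T / (2 * K) := by linarith
        rw [div_le_div_iff₀ (by norm_num) (by positivity)] at h3
        nlinarith [h3]
    -- displacement bound
    have hE : ∀ τ ∈ Set.Icc t b, (x τ - x t) ⬝ᵥ (x τ - x t) ≤ T * (c * Δ) := by
      intro τ hτ
      have hgt : ∀ s ∈ Set.uIcc t τ, HasDerivAt (fun s => toEuc d (x s)) (toEuc d (g s)) s := by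
        intro s hs
        rw [Set.uIcc_of_le hτ.1] at hs
        have hs0 : 0 ≤ s := le_trans ht hs.1
        exact ((toEuc d).hasFDerivAt).comp_hasDerivAt s (hsol s hs0)
      have hiII : IntervalIntegrable (fun s => toEuc d (g s)) volume t b := by
        rw [intervalIntegrable_iff_integrableOn_Icc_of_le htb]
        refine Integrable.mono' ((integrable_const (1:ℝ)).add hqIcc)
          ((toEuc d).continuous.comp_aestronglyMeasurable hgmeas) (ae_of_all _ fun s => ?_)
        rw [euclNorm_eq_norm]
        exact hnrm_le s
      have hiIIτ : IntervalIntegrable (fun s => toEuc d (g s)) volume t τ :=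
        hiII.mono_set (by
          rw [Set.uIcc_of_le hτ.1, Set.uIcc_of_le htb]
          exact Set.Icc_subset_Icc le_rfl hτ.2)
      have hFTC := intervalIntegral.integral_eq_sub_of_hasDerivAt hgt hiIIτ
      have hnorm : ‖toEuc d (x τ) - toEuc d (x t)‖ ≤ ∫ s in t..τ, ‖toEuc d (g s)‖ := by
        rw [← hFTC]
        exact intervalIntegral.norm_integral_le_integral_norm hτ.1
      have hnrm_eq : ∀ s : ℝ, ‖toEuc d (g s)‖ = nrm s := fun s => euclNorm_eq_norm (g s)
      have hle2 : (∫ s in t..τ, ‖toEuc d (g s)‖) ≤ K := by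
        simp only [hnrm_eq]
        exact intervalIntegral.integral_mono_interval le_rfl hτ.1 hτ.2
          (ae_of_all _ fun s => hnrm0 s) hnrmII
      have h5 : ‖toEuc d (x τ - x t)‖ ≤ K := by
        rw [map_sub]
        exact le_trans hnorm hle2
      have h6 : euclNorm (x τ - x t) ≤ K := by
        rw [← euclNorm_eq_norm]
        exact h5
      calc (x τ - x t) ⬝ᵥ (x τ - x t) = euclNorm (x τ - x t) ^ 2 := (euclNorm_sq _).symm
        _ ≤ K ^ 2 := pow_le_pow_left₀ (euclNorm_nonneg _) h6 2
        _ ≤ T * (c * Δ) := hK2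
    -- Step C: integrated quadratic form bounds
    have hSint : ∀ i j, IntervalIntegrable (fun τ => Sig τ i j) volume t b := by
      intro i j
      rw [intervalIntegrable_iff_integrableOn_Icc_of_le htb]
      refine hboundInt _ lamS ((hSmeas i j).aestronglyMeasurable) fun s hs => ?_
      rw [Real.norm_eq_abs]
      exact entry_bound (hSpsd s (hmem s hs)) (hSbound s (hmem s hs)) i j
    have hdot_expand : ∀ (M : Matrix (Fin d) (Fin d) ℝ) (w u : Fin d → ℝ),
        w ⬝ᵥ M *ᵥ u = ∑ i, ∑ j, w i * (M i j * u j) := by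
      intro M w u
      simp [dotProduct, Matrix.mulVec, Finset.mul_sum]
    set v : Fin d → ℝ := x t with hvdef
    have hterm : ∀ i j, IntervalIntegrable (fun τ => v i * (Sig τ i j * v j)) volume t b := by
      intro i j
      have h1 : (fun τ => v i * (Sig τ i j * v j)) = fun τ => v i * v j * Sig τ i j := by
        funext τ; ring
      rw [h1]
      exact (hSint i j).const_mul _
    have hsum_swap : ∀ i : Fin d,
        IntervalIntegrable (fun τ => ∑ j, v i * (Sig τ i j * v j)) volume t b := by
      intro i
      have h1 : (fun τ => ∑ j, v i * (Sig τ i j * v j)) =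
          (∑ j : Fin d, fun τ => v i * (Sig τ i j * v j)) := by
        funext τ; simp
      rw [h1]
      exact IntervalIntegrable.sum _ fun j _ => hterm i j
    have hAII : IntervalIntegrable (fun τ => v ⬝ᵥ Sig τ *ᵥ v) volume t b := by
      have h1 : (fun τ => v ⬝ᵥ Sig τ *ᵥ v) =
          (∑ i : Fin d, fun τ => ∑ j, v i * (Sig τ i j * v j)) := by
        funext τ; simp [hdot_expand]
      rw [h1]
      exact IntervalIntegrable.sum _ fun i _ => hsum_swap i
    have hAeq : ∫ τ in t..b, (v ⬝ᵥ Sig τ *ᵥ v) =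
        v ⬝ᵥ (Matrix.of fun i j => ∫ τ in t..b, Sig τ i j) *ᵥ v := by
      rw [intervalIntegral.integral_congr (fun τ _ => hdot_expand (Sig τ) v v)]
      rw [intervalIntegral.integral_finset_sum (fun i _ => hsum_swap i)]
      rw [hdot_expand]
      refine Finset.sum_congr rfl fun i _ => ?_
      rw [intervalIntegral.integral_finset_sum (fun j _ => hterm i j)]
      refine Finset.sum_congr rfl fun j _ => ?_
      rw [intervalIntegral.integral_const_mul, intervalIntegral.integral_mul_const]
      rfl
    have hPEv : T * (μ * (v ⬝ᵥ v)) ≤ ∫ τ in t..b, (v ⬝ᵥ Sig τ *ᵥ v) := by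
      rw [hAeq]
      have h := (hPE t ht).dotProduct_mulVec_nonneg v
      simp only [star_trivial] at h
      rw [Matrix.sub_mulVec, Matrix.smul_mulVec, Matrix.smul_mulVec,
        Matrix.one_mulVec, dotProduct_sub, dotProduct_smul, dotProduct_smul,
        smul_eq_mul, smul_eq_mul, sub_nonneg] at h
      rw [← hb] at h
      calc T * (μ * (v ⬝ᵥ v)) ≤ T * (T⁻¹ * (v ⬝ᵥ (Matrix.of fun i j =>
            ∫ τ in t..b, Sig τ i j) *ᵥ v)) := mul_le_mul_of_nonneg_left h hT.le
        _ = v ⬝ᵥ (Matrix.of fun i j => ∫ τ in t..b, Sig τ i j) *ᵥ v := by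
          rw [← mul_assoc, mul_inv_cancel₀ hT.ne', one_mul]
    -- integrability of the quadratic form along the solution
    have hxmeas : AEStronglyMeasurable x (volume.restrict (Set.Icc t b)) :=
      hxc.aestronglyMeasurable measurableSet_Icc
    obtain ⟨Cx, hCx⟩ := isCompact_Icc.exists_bound_of_continuousOn
      (show ContinuousOn (fun τ => x τ ⬝ᵥ x τ) (Set.Icc t b) from
        continuousOn_finset_sum _ fun i _ =>
          (((continuous_apply i).comp_continuousOn hxc).mul
            ((continuous_apply i).comp_continuousOn hxc)))
    have hQmeas : AEStronglyMeasurable (fun τ => x τ ⬝ᵥ Sig τ *ᵥ x τ)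
        (volume.restrict (Set.Icc t b)) := by
      have h1 : (fun τ => x τ ⬝ᵥ Sig τ *ᵥ x τ) =
          fun τ => ∑ i, ∑ j, x τ i * (Sig τ i j * x τ j) :=
        funext fun τ => hdot_expand _ _ _
      rw [h1]
      refine Finset.aestronglyMeasurable_fun_sum _ fun i _ =>
        Finset.aestronglyMeasurable_fun_sum _ fun j _ => ?_
      exact ((continuous_apply i).comp_aestronglyMeasurable hxmeas).mul
        (((hSmeas i j).aestronglyMeasurable).mul
          ((continuous_apply j).comp_aestronglyMeasurable hxmeas))
    have hQbd : ∀ τ ∈ Set.Icc t b, ‖x τ ⬝ᵥ Sig τ *ᵥ x τ‖ ≤ lamS * Cx := by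
      intro τ hτ
      have h0 := (hSpsd τ (hmem τ hτ)).dotProduct_mulVec_nonneg (x τ)
      simp only [star_trivial] at h0
      have h1 := hSbound τ (hmem τ hτ) (x τ)
      have h2 := hCx τ hτ
      rw [Real.norm_eq_abs] at h2
      rw [Real.norm_eq_abs, abs_of_nonneg h0]
      have h3 : x τ ⬝ᵥ x τ ≤ Cx := le_trans (le_abs_self _) h2
      calc x τ ⬝ᵥ Sig τ *ᵥ x τ ≤ lamS * (x τ ⬝ᵥ x τ) := h1
        _ ≤ lamS * Cx := mul_le_mul_of_nonneg_left h3 hlamS.le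
    have hQIcc : IntegrableOn (fun τ => x τ ⬝ᵥ Sig τ *ᵥ x τ) (Set.Icc t b) :=
      hboundInt _ _ hQmeas hQbd
    have hQII : IntervalIntegrable (fun τ => x τ ⬝ᵥ Sig τ *ᵥ x τ) volume t b :=
      (intervalIntegrable_iff_integrableOn_Icc_of_le htb).2 hQIcc
    -- pointwise lower bound
    set r : ℝ := ρ / (1 + ρ) with hrdef
    have h1ρ : (0:ℝ) < 1 + ρ := by linarith
    have hr1 : r * (1 + ρ) = ρ := by rw [hrdef]; field_simp
    have hr0 : 0 < r := div_pos hρ h1ρ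
    set W : ℝ := T * (c * Δ) with hWdef
    have hW0 : 0 ≤ W := by
      rw [hWdef]
      exact mul_nonneg hT.le (mul_nonneg hc.le hΔ0)
    have hlow : ∀ τ ∈ Set.Icc t b,
        r * (v ⬝ᵥ Sig τ *ᵥ v) - ρ * (lamS * W) ≤ x τ ⬝ᵥ Sig τ *ᵥ x τ := by
      intro τ hτ
      have hpsd := hSpsd τ (hmem τ hτ)
      have hq := quad_lower hpsd v (x τ - v) hρ
      rw [show v + (x τ - v) = x τ by abel] at hq
      have he1 : (x τ - v) ⬝ᵥ Sig τ *ᵥ (x τ - v) ≤ lamS * W := by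
        have h4 := hSbound τ (hmem τ hτ) (x τ - v)
        have h5 := hE τ hτ
        calc (x τ - v) ⬝ᵥ Sig τ *ᵥ (x τ - v) ≤ lamS * ((x τ - v) ⬝ᵥ (x τ - v)) := h4
          _ ≤ lamS * W := mul_le_mul_of_nonneg_left h5 hlamS.le
      have h6 : ρ * ((x τ - v) ⬝ᵥ Sig τ *ᵥ (x τ - v)) ≤ ρ * (lamS * W) :=
        mul_le_mul_of_nonneg_left he1 hρ.le
      rw [← hrdef] at hq
      linarith
    have hlowII : IntervalIntegrable
        (fun τ => r * (v ⬝ᵥ Sig τ *ᵥ v) - ρ * (lamS * W)) volume t b :=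
      (hAII.const_mul r).sub intervalIntegrable_const
    have hInt1 : ∫ τ in t..b, (r * (v ⬝ᵥ Sig τ *ᵥ v) - ρ * (lamS * W)) =
        r * (∫ τ in t..b, v ⬝ᵥ Sig τ *ᵥ v) - ρ * (lamS * W) * T := by
      rw [intervalIntegral.integral_sub (hAII.const_mul r) intervalIntegrable_const,
        intervalIntegral.integral_const_mul, intervalIntegral.integral_const]
      have hbt : b - t = T := by rw [hb]; ring
      rw [hbt, smul_eq_mul]
      ring
    have hQlow : r * (∫ τ in t..b, v ⬝ᵥ Sig τ *ᵥ v) - ρ * (lamS * W) * T ≤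
        ∫ τ in t..b, x τ ⬝ᵥ Sig τ *ᵥ x τ := by
      rw [← hInt1]
      exact intervalIntegral.integral_mono_on htb hlowII hQII hlow
    -- FTC inequality with the PE bound
    have hFTC2 : L b (x b) - L t (x t) ≤ ∫ τ in t..b, (-γ * (x τ ⬝ᵥ Sig τ *ᵥ x τ)) := by
      refine intervalIntegral.sub_le_integral_of_hasDeriv_right_of_le htb hLc
        (fun s hs => (hLd s (hmem s (Set.Ioo_subset_Icc_self hs))).hasDerivWithinAt)
        (hQIcc.const_mul (-γ)) (fun s hs => ha s (hmem s (Set.Ioo_subset_Icc_self hs)))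
    have hγQ : γ * ∫ τ in t..b, (x τ ⬝ᵥ Sig τ *ᵥ x τ) ≤ Δ := by
      rw [intervalIntegral.integral_const_mul] at hFTC2
      have hΔeq : Δ = L t (x t) - L b (x b) := hΔdef
      linarith
    -- assemble everything
    have hmain : γ * (r * (T * (μ * (v ⬝ᵥ v))) - ρ * (lamS * W) * T) ≤ Δ := by
      have h2 : r * (T * (μ * (v ⬝ᵥ v))) - ρ * (lamS * W) * T ≤
          ∫ τ in t..b, x τ ⬝ᵥ Sig τ *ᵥ x τ := by
        refine le_trans ?_ hQlow
        have h3 := mul_le_mul_of_nonneg_left hPEv hr0.le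
        linarith
      calc γ * (r * (T * (μ * (v ⬝ᵥ v))) - ρ * (lamS * W) * T)
          ≤ γ * ∫ τ in t..b, x τ ⬝ᵥ Sig τ *ᵥ x τ := mul_le_mul_of_nonneg_left h2 hγ.le
        _ ≤ Δ := hγQ
    have hvvLt : L t (x t) ≤ lam2 * (v ⬝ᵥ v) := by
      have h := (hL t ht v).2
      rwa [euclNorm_sq] at h
    have hLt0 : 0 ≤ L t (x t) := by
      have h1 := (hL t ht v).1
      have h2 : 0 ≤ lam1 * euclNorm v ^ 2 := by positivity
      linarith
    have hvv0 : 0 ≤ v ⬝ᵥ v := dot_self_nonneg v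
    have hD : (0:ℝ) < (1 + ρ) * (1 + ρ * c * T ^ 2 * γ * lamS) * lam2 := by positivity
    rw [sub_mul, one_mul, le_sub_comm, ← hΔdef, sigmaOf, div_mul_eq_mul_div,
      div_le_iff₀ hD]
    rw [hWdef] at hmain
    have P1 := mul_le_mul_of_nonneg_left hmain (by positivity : (0:ℝ) ≤ (1 + ρ) * lam2)
    have P2 := mul_le_mul_of_nonneg_left hvvLt
      (by positivity : (0:ℝ) ≤ ρ * μ * T * γ)
    have hr2 : (1 + ρ) * lam2 * (γ * (r * (T * (μ * (v ⬝ᵥ v))))) =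
        ρ * μ * T * γ * (lam2 * (v ⬝ᵥ v)) := by
      have h9 : (1 + ρ) * r = ρ := by linarith [hr1]
      calc (1 + ρ) * lam2 * (γ * (r * (T * (μ * (v ⬝ᵥ v)))))
          = ((1 + ρ) * r) * (lam2 * (γ * (T * (μ * (v ⬝ᵥ v))))) := by ring
        _ = ρ * μ * T * γ * (lam2 * (v ⬝ᵥ v)) := by rw [h9]; ring
    nlinarith [P1, P2, hr2, hΔ0, hvv0, hLt0]
  · have hden : (0:ℝ) < μ * T * γ := by positivity
    set ρ₀ : ℝ := lam2 / (μ * T * γ) with hρ₀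
    have hρ₀pos : 0 < ρ₀ := div_pos hlam2 hden
    have hA : (0:ℝ) < 1 + ρ₀ := by linarith
    have hB : (0:ℝ) < 1 + ρ₀ * c * T ^ 2 * γ * lamS := by positivity
    have heq : sigmaOf ρ₀ μ T γ c lamS lam2 =
        1 / ((1 + ρ₀) * (1 + ρ₀ * c * T ^ 2 * γ * lamS)) := by
      rw [sigmaOf]
      have h1 : ρ₀ * μ * T * γ = lam2 := by
        rw [hρ₀]
        field_simp
      rw [h1, div_eq_div_iff (by positivity) (by positivity)]
      ring
    refine ⟨heq, ?_⟩
    rw [heq]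
    have h2 : 1 < (1 + ρ₀) * (1 + ρ₀ * c * T ^ 2 * γ * lamS) := by
      have hZ : 0 < ρ₀ * c * T ^ 2 * γ * lamS := by positivity
      nlinarith [hρ₀pos, hZ, mul_pos hρ₀pos hZ]
    rw [div_lt_one (lt_trans one_pos h2)]
    exact h2
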